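/- Let K ⊆ ℝⁿ be a compact set, f : K → [0,∞) Borel measurable and integrable, ξ a unit vector, and p > 0. Then (∫_K f(x) dx)^{p+1} ≤ 2^p (p+1) · (sup_{s∈ℝ} ∫_{K ∩ {⟨x,ξ⟩=s}} f(x) dx)^p · ∫_K |⟨x,ξ⟩|^p f(x) dx. -/

import Mathlib

open MeasureTheory Metric Set
open scoped RealInnerProductSpace ENNReal

lemma slicing_one_dim_real (g : ℝ → ℝ) (hgint : Integrable g) (hg0 : ∀ t, 0 ≤ g t)
    (m : ℝ) (hm : 0 < m) (hgm : ∀ t, g t ≤ m) {p : ℝ} (hp : 0 < p)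
    (hgp : Integrable (fun t => |t| ^ p * g t)) :
    (∫ t, g t) ^ (p + 1) ≤ 2 ^ p * (p + 1) * m ^ p * ∫ t, |t| ^ p * g t := by
  have hJ0 : 0 ≤ ∫ t, |t| ^ p * g t :=
    integral_nonneg fun t => mul_nonneg (by positivity) (hg0 t)
  set i := ∫ t, g t with hi
  have hi0 : 0 ≤ i := integral_nonneg hg0
  rcases eq_or_lt_of_le hi0 with h0 | hipos
  · rw [← h0, Real.zero_rpow (by positivity)]
    positivity
  set a := i / (2 * m) with ha
  have hapos : 0 < a := by positivity
  have hia : i = 2 * m * a := by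
    have hm' : m ≠ 0 := hm.ne'
    rw [ha]; field_simp
  have hcont : Continuous fun t : ℝ => |t| ^ p :=
    continuous_abs.rpow_const fun x => Or.inr hp.le
  have hIcc : MeasurableSet (Icc (-a) a) := measurableSet_Icc
  set I1 : ℝ → ℝ := Set.indicator (Icc (-a) a) (fun _ => (1:ℝ)) with hI1
  -- integrable pieces
  have hT3' : (fun t => |t| ^ p * I1 t) = Set.indicator (Icc (-a) a) (fun t => |t| ^ p) := by
    funext t; by_cases h : t ∈ Icc (-a) a <;> simp [hI1, h]
  have hT3 : Integrable (fun t => |t| ^ p * I1 t) := by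
    rw [hT3', integrable_indicator_iff hIcc]
    exact hcont.integrableOn_Icc
  have hT4 : Integrable I1 := by
    rw [hI1, integrable_indicator_iff hIcc]
    exact integrableOn_const measure_Icc_lt_top.ne
  -- pointwise nonnegativity
  have key : ∀ t, 0 ≤ (|t| ^ p - a ^ p) * (g t - m * I1 t) := by
    intro t
    by_cases ht : t ∈ Icc (-a) a
    · have h1 : |t| ≤ a := abs_le.2 ⟨(mem_Icc.1 ht).1, (mem_Icc.1 ht).2⟩
      have h2 : |t| ^ p ≤ a ^ p := Real.rpow_le_rpow (abs_nonneg t) h1 hp.le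
      rw [hI1, Set.indicator_of_mem ht, mul_one]
      nlinarith [hgm t]
    · have h1 : a ≤ |t| := le_of_not_gt fun hlt => ht (mem_Icc.2 (abs_le.1 hlt.le))
      have h2 : a ^ p ≤ |t| ^ p := Real.rpow_le_rpow hapos.le h1 hp.le
      rw [hI1, Set.indicator_of_notMem ht, mul_zero, sub_zero]
      exact mul_nonneg (by linarith) (hg0 t)
  -- integral of the product expansion
  have hexp : ∀ t, (|t| ^ p - a ^ p) * (g t - m * I1 t) =
      |t| ^ p * g t - a ^ p * g t - m * (|t| ^ p * I1 t) + (a ^ p * m) * I1 t := by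
    intro t; ring
  have hint : Integrable (fun t => (|t| ^ p - a ^ p) * (g t - m * I1 t)) := by
    have : (fun t => (|t| ^ p - a ^ p) * (g t - m * I1 t)) =
        fun t => |t| ^ p * g t - a ^ p * g t - m * (|t| ^ p * I1 t) + (a ^ p * m) * I1 t := by
      funext t; exact hexp t
    rw [this]
    exact (((hgp.sub (hgint.const_mul _)).sub (hT3.const_mul _)).add (hT4.const_mul _))
  have hnn : 0 ≤ ∫ t, (|t| ^ p - a ^ p) * (g t - m * I1 t) :=
    integral_nonneg key
  -- compute pieces
  have hB : ∫ t, I1 t = 2 * a := by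
    rw [hI1, integral_indicator hIcc, setIntegral_const, Real.volume_real_Icc_of_le (by linarith), smul_eq_mul, mul_one]
    ring
  have hA : ∫ t, |t| ^ p * I1 t = 2 * (a ^ (p + 1) / (p + 1)) := by
    rw [hT3']
    have habs : ∀ t : ℝ, Set.indicator (Icc (-a) a) (fun t => |t| ^ p) t =
        Set.indicator (Icc 0 a) (fun u => u ^ p) |t| := by
      intro t
      by_cases h : t ∈ Icc (-a) a
      · rw [Set.indicator_of_mem h, Set.indicator_of_mem
          (mem_Icc.2 ⟨abs_nonneg t, abs_le.2 ⟨(mem_Icc.1 h).1, (mem_Icc.1 h).2⟩⟩)]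
      · rw [Set.indicator_of_notMem h, Set.indicator_of_notMem]
        intro hmem
        exact h (mem_Icc.2 (abs_le.1 (mem_Icc.1 hmem).2))
    calc ∫ t, Set.indicator (Icc (-a) a) (fun t => |t| ^ p) t
        = ∫ t, Set.indicator (Icc 0 a) (fun u => u ^ p) |t| := by
          exact integral_congr_ae (Filter.Eventually.of_forall habs)
      _ = 2 * ∫ u in Ioi (0:ℝ), Set.indicator (Icc 0 a) (fun u => u ^ p) u :=
          integral_comp_abs
      _ = 2 * ∫ u in Ioi (0:ℝ) ∩ Icc 0 a, u ^ p := by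
          rw [setIntegral_indicator measurableSet_Icc]
      _ = 2 * ∫ u in Ioc (0:ℝ) a, u ^ p := by
          congr 1
          have : Ioi (0:ℝ) ∩ Icc 0 a = Ioc 0 a := by
            ext x; simp only [mem_inter_iff, mem_Ioi, mem_Icc, mem_Ioc]
            constructor
            · rintro ⟨h1, _, h3⟩; exact ⟨h1, h3⟩
            · rintro ⟨h1, h2⟩; exact ⟨h1, h1.le, h2⟩
          rw [this]
      _ = 2 * ∫ u in (0:ℝ)..a, u ^ p := by
          rw [intervalIntegral.integral_of_le hapos.le]
      _ = 2 * (a ^ (p + 1) / (p + 1)) := by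
          rw [integral_rpow (Or.inl (by linarith))]
          rw [Real.zero_rpow (by positivity)]
          ring_nf
  -- expand the integral
  have hsplit : ∫ t, (|t| ^ p - a ^ p) * (g t - m * I1 t) =
      (∫ t, |t| ^ p * g t) - a ^ p * i - m * (2 * (a ^ (p + 1) / (p + 1)))
        + (a ^ p * m) * (2 * a) := by
    calc ∫ t, (|t| ^ p - a ^ p) * (g t - m * I1 t)
        = ∫ t, (|t| ^ p * g t - a ^ p * g t - m * (|t| ^ p * I1 t) + (a ^ p * m) * I1 t) :=
          integral_congr_ae (Filter.Eventually.of_forall hexp)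
      _ = (∫ t, |t| ^ p * g t) - a ^ p * i - m * (2 * (a ^ (p + 1) / (p + 1)))
            + (a ^ p * m) * (2 * a) := by
          have hint2 : Integrable (fun t => |t| ^ p * g t - a ^ p * g t) :=
            hgp.sub (hgint.const_mul _)
          have hint1 : Integrable
              (fun t => |t| ^ p * g t - a ^ p * g t - m * (|t| ^ p * I1 t)) :=
            hint2.sub (hT3.const_mul _)
          rw [integral_add hint1 (hT4.const_mul _), integral_sub hint2 (hT3.const_mul _),
            integral_sub hgp (hgint.const_mul _),
            integral_const_mul, integral_const_mul, integral_const_mul, hB, hA, ← hi]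
  rw [hsplit] at hnn
  have hap1 : a ^ (p + 1) = a ^ p * a := Real.rpow_add_one hapos.ne' p
  have hppos : 0 < p + 1 := by linarith
  rw [hap1, hia] at hnn
  have hJ'' : m * (2 * (a ^ p * a / (p + 1))) ≤ ∫ t, |t| ^ p * g t := by linarith [hnn]
  have h5 : 2 * m * (a ^ p * a) ≤ (∫ t, |t| ^ p * g t) * (p + 1) := by
    have h5' : 2 * m * (a ^ p * a) / (p + 1) ≤ ∫ t, |t| ^ p * g t := by
      have : m * (2 * (a ^ p * a / (p + 1))) = 2 * m * (a ^ p * a) / (p + 1) := by ring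
      linarith [hJ'', this.ge]
    exact (div_le_iff₀ hppos).1 h5'
  have h6 : a ^ p * i ≤ (p + 1) * ∫ t, |t| ^ p * g t := by
    rw [hia]; nlinarith [h5]
  have hipow : i ^ (p + 1) = 2 ^ p * m ^ p * (a ^ p * i) := by
    rw [Real.rpow_add_one hipos.ne' p, hia,
      Real.mul_rpow (by positivity) hapos.le, Real.mul_rpow (by norm_num) hm.le]
    ring
  rw [hipow]
  have h2p : (0:ℝ) < 2 ^ p := Real.rpow_pos_of_pos (by norm_num) p
  have hmp : (0:ℝ) < m ^ p := Real.rpow_pos_of_pos hm p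
  have h7 := mul_le_mul_of_nonneg_left h6 (mul_pos h2p hmp).le
  nlinarith [h7]

lemma slicing_one_dim (G : ℝ → ℝ≥0∞) (hG : Measurable G) (M : ℝ≥0∞) (hGM : ∀ s, G s ≤ M)
    {p : ℝ} (hp : 0 < p) (hIfin : ∫⁻ s, G s ≠ ∞) :
    (∫⁻ s, G s) ^ (p + 1) ≤
      ENNReal.ofReal (2 ^ p * (p + 1)) * M ^ p * ∫⁻ s, ENNReal.ofReal (|s| ^ p) * G s := by
  have hwmeas : Measurable fun s : ℝ => ENNReal.ofReal (|s| ^ p) :=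
    (ENNReal.measurable_ofReal.comp
      ((continuous_abs.rpow_const fun x => Or.inr hp.le).measurable))
  have hφmeas : Measurable fun s : ℝ => ENNReal.ofReal (|s| ^ p) * G s := hwmeas.mul hG
  by_cases hI0 : ∫⁻ s, G s = 0
  · rw [hI0, ENNReal.zero_rpow_of_pos (by linarith)]
    exact zero_le
  -- J = 0 implies I = 0
  have hJ0 : ∫⁻ s, ENNReal.ofReal (|s| ^ p) * G s ≠ 0 := by
    intro hJ
    apply hI0
    rw [lintegral_eq_zero_iff hG]
    rw [lintegral_eq_zero_iff hφmeas] at hJ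
    have hne : ∀ᵐ s : ℝ, s ≠ 0 := by
      rw [ae_iff]
      simp only [ne_eq, not_not, Set.setOf_eq_eq_singleton]
      exact Real.volume_singleton
    filter_upwards [hJ, hne] with s hs hs0
    simp only [Pi.zero_apply, mul_eq_zero] at hs ⊢
    rcases hs with hs | hs
    · exfalso
      rw [ENNReal.ofReal_eq_zero] at hs
      have : 0 < |s| ^ p := Real.rpow_pos_of_pos (abs_pos.2 hs0) p
      linarith
    · exact hs
  have hM0 : M ≠ 0 := by
    intro hM
    apply hI0
    rw [lintegral_eq_zero_iff hG]
    exact Filter.Eventually.of_forall fun s => by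
      simpa using le_antisymm ((hGM s).trans hM.le) zero_le
  have hconst : ENNReal.ofReal (2 ^ p * (p + 1)) ≠ 0 := by
    rw [ne_eq, ENNReal.ofReal_eq_zero, not_le]
    have : (0:ℝ) < 2 ^ p := Real.rpow_pos_of_pos (by norm_num) p
    nlinarith
  by_cases hMtop : M = ∞
  · rw [hMtop, ENNReal.top_rpow_of_pos hp]
    rw [ENNReal.mul_top hconst]
    rw [ENNReal.top_mul hJ0]
    exact le_top
  by_cases hJtop : ∫⁻ s, ENNReal.ofReal (|s| ^ p) * G s = ∞
  · rw [hJtop, ENNReal.mul_top]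
    · exact le_top
    · exact mul_ne_zero hconst (by simp [ENNReal.rpow_eq_zero_iff, hM0, hp.le, not_lt.2 hp.le, hp])
  -- main case
  set g : ℝ → ℝ := fun s => (G s).toReal with hg
  have hGlt : ∀ s, G s < ∞ := fun s => lt_of_le_of_lt (hGM s) (lt_top_iff_ne_top.2 hMtop)
  have hm : 0 < M.toReal := ENNReal.toReal_pos hM0 hMtop
  have hgm : ∀ s, g s ≤ M.toReal := fun s => ENNReal.toReal_mono hMtop (hGM s)
  have hg0 : ∀ s, 0 ≤ g s := fun s => ENNReal.toReal_nonneg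
  have hgint : Integrable g := integrable_toReal_of_lintegral_ne_top hG.aemeasurable hIfin
  have hi_eq : ∫ s, g s = (∫⁻ s, G s).toReal :=
    integral_toReal hG.aemeasurable (Filter.Eventually.of_forall hGlt)
  have hφtoreal : ∀ s : ℝ, ((ENNReal.ofReal (|s| ^ p) * G s)).toReal = |s| ^ p * g s := by
    intro s
    rw [ENNReal.toReal_mul, ENNReal.toReal_ofReal (by positivity)]
  have hgp : Integrable (fun t => |t| ^ p * g t) := by
    have := integrable_toReal_of_lintegral_ne_top hφmeas.aemeasurable hJtop
    exact this.congr (Filter.Eventually.of_forall hφtoreal)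
  have hJ_eq : ∫ t, |t| ^ p * g t = (∫⁻ s, ENNReal.ofReal (|s| ^ p) * G s).toReal := by
    rw [← integral_toReal hφmeas.aemeasurable
      (Filter.Eventually.of_forall fun s => ENNReal.mul_lt_top ENNReal.ofReal_lt_top (hGlt s))]
    exact integral_congr_ae (Filter.Eventually.of_forall fun s => (hφtoreal s).symm)
  have hkey := slicing_one_dim_real g hgint hg0 M.toReal hm hgm hp hgp
  rw [hi_eq, hJ_eq] at hkey
  -- lift to ENNReal
  calc (∫⁻ s, G s) ^ (p + 1)
      = ENNReal.ofReal ((∫⁻ s, G s).toReal ^ (p + 1)) := by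
        rw [← ENNReal.ofReal_rpow_of_nonneg ENNReal.toReal_nonneg (by linarith),
          ENNReal.ofReal_toReal hIfin]
    _ ≤ ENNReal.ofReal (2 ^ p * (p + 1) * M.toReal ^ p *
          (∫⁻ s, ENNReal.ofReal (|s| ^ p) * G s).toReal) := ENNReal.ofReal_le_ofReal hkey
    _ = ENNReal.ofReal (2 ^ p * (p + 1)) * M ^ p * ∫⁻ s, ENNReal.ofReal (|s| ^ p) * G s := by
        rw [ENNReal.ofReal_mul (by positivity), ENNReal.ofReal_mul (by positivity),
          ← ENNReal.ofReal_rpow_of_nonneg ENNReal.toReal_nonneg hp.le,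
          ENNReal.ofReal_toReal hMtop, ENNReal.ofReal_toReal hJtop]

lemma volume_le_hausdorff (m : ℕ) :
    (volume : Measure (EuclideanSpace ℝ (Fin m))) ≤ μH[(m : ℝ)] := by
  refine MeasureTheory.Measure.le_hausdorffMeasure _ _ ∞ (by simp) fun s _ => ?_
  set e := (MeasurableEquiv.toLp 2 (Fin m → ℝ)).symm with he
  have hcl : MeasurableSet (e '' closure s) := by
    rw [MeasurableEquiv.image_eq_preimage_symm]
    exact e.symm.measurable measurableSet_closure
  have h2 : volume (closure s) = volume (e '' closure s) := by
    rw [← (EuclideanSpace.volume_preserving_symm_measurableEquiv_toLp (Fin m)).measure_preimage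
      hcl.nullMeasurableSet]
    congr 1
    exact (e.toEquiv.preimage_image (closure s)).symm
  have h4 : ediam (e '' closure s) ≤ ediam (closure s) := by
    have hlip : LipschitzWith 1 e := by
      exact PiLp.lipschitzWith_ofLp 2 (fun _ : Fin m => ℝ)
    simpa using hlip.ediam_image_le (closure s)
  calc volume s ≤ volume (closure s) := measure_mono subset_closure
    _ = volume (e '' closure s) := h2
    _ ≤ ediam (e '' closure s) ^ Fintype.card (Fin m) := Real.volume_pi_le_diam_pow _
    _ ≤ ediam s ^ Fintype.card (Fin m) := by
        refine pow_le_pow_left' ?_ _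
        rw [← EMetric.diam_closure (s := s)]
        exact h4
    _ = ediam s ^ (m : ℝ) := by
        rw [Fintype.card_fin, ← ENNReal.rpow_natCast]

lemma map_isometry_volume_le_hausdorff {m k : ℕ}
    {ψ : EuclideanSpace ℝ (Fin m) → EuclideanSpace ℝ (Fin k)} (hψ : Isometry ψ) :
    Measure.map ψ volume ≤ μH[(m : ℝ)] :=
  calc Measure.map ψ volume ≤ Measure.map ψ μH[(m : ℝ)] :=
        Measure.map_mono (volume_le_hausdorff m) hψ.continuous.measurable
    _ = μH[(m : ℝ)].restrict (Set.range ψ) :=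
        hψ.map_hausdorffMeasure (Or.inl (Nat.cast_nonneg m))
    _ ≤ μH[(m : ℝ)] := Measure.restrict_le_self

/-- For a compact `K ⊆ ℝⁿ`, nonnegative Borel measurable integrable
`f` on `K`, a unit vector `ξ` and `p > 0`,
`(∫_K f)^(p+1) ≤ 2^p (p+1) (sup_s ∫_{K∩{⟨x,ξ⟩=s}} f)^p ∫_K |⟨x,ξ⟩|^p f(x) dx`,
sections being measured by `(n-1)`-dimensional Hausdorff (Lebesgue) measure. -/
theorem slicing_moment_inequality_on_set
    {n : ℕ} (hn : 1 ≤ n)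
    (K : Set (EuclideanSpace ℝ (Fin n))) (hK : IsCompact K)
    (f : EuclideanSpace ℝ (Fin n) → ℝ)
    (hfm : Measurable f) (hf0 : ∀ x, 0 ≤ f x) (hfint : IntegrableOn f K)
    (ξ : EuclideanSpace ℝ (Fin n)) (hξ : ‖ξ‖ = 1)
    (p : ℝ) (hp : 0 < p) :
    (∫⁻ x in K, ENNReal.ofReal (f x)) ^ (p + 1) ≤
      ENNReal.ofReal (2 ^ p * (p + 1)) *
        (⨆ s : ℝ, ∫⁻ x in K ∩ {x : EuclideanSpace ℝ (Fin n) | ⟪x, ξ⟫ = s},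
            ENNReal.ofReal (f x) ∂(μH[(n : ℝ) - 1])) ^ p *
        ∫⁻ x in K, ENNReal.ofReal (|⟪x, ξ⟫| ^ p * f x) := by
  obtain ⟨m, rfl⟩ : ∃ m, n = m + 1 := ⟨n - 1, (Nat.succ_pred_eq_of_pos hn).symm⟩
  rw [show ((m + 1 : ℕ) : ℝ) - 1 = (m : ℝ) by push_cast; ring]
  -- an orthonormal basis whose 0-th vector is ξ
  have hcard : Module.finrank ℝ (EuclideanSpace ℝ (Fin (m + 1))) = Fintype.card (Fin (m + 1)) := by
    simp
  have hon : Orthonormal ℝ (({0} : Set (Fin (m + 1))).restrict fun _ => ξ) := by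
    rw [orthonormal_iff_ite]
    rintro ⟨i, hi⟩ ⟨j, hj⟩
    simp only [Set.mem_singleton_iff] at hi hj
    subst hi; subst hj
    rw [if_pos rfl]
    show ⟪ξ, ξ⟫ = 1
    rw [real_inner_self_eq_norm_sq, hξ]; norm_num
  obtain ⟨b, hb⟩ := hon.exists_orthonormalBasis_extension_of_card_eq hcard
  have hbξ : b 0 = ξ := hb 0 rfl
  have key0 : ∀ x : EuclideanSpace ℝ (Fin (m + 1)), ⟪x, ξ⟫ = b.repr x 0 := fun x => by
    rw [b.repr_apply_apply, hbξ]; exact real_inner_comm ξ x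
  -- the composite measurable equivalence
  set eN := (MeasurableEquiv.toLp 2 (Fin (m + 1) → ℝ)).symm with heN
  set eM := (MeasurableEquiv.toLp 2 (Fin m → ℝ)).symm with heM
  set π0 := MeasurableEquiv.piFinSuccAbove (fun _ : Fin (m + 1) => ℝ) 0 with hπ0
  set Φ : ℝ × (Fin m → ℝ) ≃ᵐ EuclideanSpace ℝ (Fin (m + 1)) :=
    (π0.symm.trans eN.symm).trans b.repr.symm.toHomeomorph.toMeasurableEquiv with hΦdef
  have hΦ : MeasurePreserving Φ volume volume :=
    b.measurePreserving_repr_symm.comp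
      (((EuclideanSpace.volume_preserving_symm_measurableEquiv_toLp (Fin (m + 1))).symm eN).comp
        ((volume_preserving_piFinSuccAbove (fun _ : Fin (m + 1) => ℝ) 0).symm π0))
  have hΦapp : ∀ (s : ℝ) (y : Fin m → ℝ),
      Φ (s, y) = b.repr.symm (eN.symm (Fin.insertNth 0 s y)) := fun s y => rfl
  -- Fubini master formula
  have master : ∀ F : EuclideanSpace ℝ (Fin (m + 1)) → ℝ≥0∞, Measurable F →
      ∫⁻ x, F x = ∫⁻ s : ℝ, ∫⁻ y : Fin m → ℝ, F (Φ (s, y)) := by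
    intro F hF
    rw [← hΦ.lintegral_comp hF, Measure.volume_eq_prod,
      lintegral_prod (fun z => F (Φ z)) (hF.comp Φ.measurable).aemeasurable]
  -- the hyperplane coordinate
  have hcoord : ∀ (w : Fin (m + 1) → ℝ) (i : Fin (m + 1)), (eN.symm w) i = w i := fun w i => by
    rw [heN]
    rfl
  have hP1 : ∀ (s : ℝ) (y : Fin m → ℝ), ⟪Φ (s, y), ξ⟫ = s := by
    intro s y
    rw [key0, hΦapp, LinearIsometryEquiv.apply_symm_apply, hcoord]
    exact Fin.insertNth_apply_same (α := fun _ => ℝ) 0 s y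
  have hF0 : Measurable fun x : EuclideanSpace ℝ (Fin (m + 1)) => ENNReal.ofReal (f x) :=
    ENNReal.measurable_ofReal.comp hfm
  have hKm : MeasurableSet K := hK.isClosed.measurableSet
  set G : ℝ → ℝ≥0∞ :=
    fun s => ∫⁻ y : Fin m → ℝ, (K.indicator fun x => ENNReal.ofReal (f x)) (Φ (s, y)) with hGdef
  have hHmeas : Measurable fun z : ℝ × (Fin m → ℝ) =>
      (K.indicator fun x => ENNReal.ofReal (f x)) (Φ z) := (hF0.indicator hKm).comp Φ.measurable
  have hGmeas : Measurable G := hHmeas.lintegral_prod_right'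
  have hI_eq : ∫⁻ x in K, ENNReal.ofReal (f x) = ∫⁻ s, G s := by
    rw [← lintegral_indicator hKm, master _ (hF0.indicator hKm)]
  -- the isometric parametrization of the slice
  have hψiso : ∀ s : ℝ, Isometry fun y : EuclideanSpace ℝ (Fin m) => Φ (s, eM y) := by
    intro s
    refine Isometry.of_dist_eq fun y y' => ?_
    rw [hΦapp, hΦapp, LinearIsometryEquiv.dist_map, EuclideanSpace.dist_eq,
      EuclideanSpace.dist_eq]
    congr 1
    rw [Fin.sum_univ_succAbove _ 0]
    have h0 : ∀ w : Fin m → ℝ, (eN.symm (Fin.insertNth 0 s w)) 0 = s := fun w => by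
      rw [hcoord]
      exact Fin.insertNth_apply_same (α := fun _ => ℝ) 0 s w
    have hsucc : ∀ (w : Fin m → ℝ) (j : Fin m),
        (eN.symm (Fin.insertNth 0 s w)) ((0 : Fin (m+1)).succAbove j) = w j := fun w j => by
      rw [hcoord]
      exact Fin.insertNth_apply_succAbove (α := fun _ => ℝ) 0 s w j
    simp only [h0, hsucc, dist_self]
    rw [zero_pow (by norm_num), zero_add]
    rfl
  -- bound for G s by the sup of slice integrals
  have hHsm : ∀ s : ℝ, MeasurableSet {x : EuclideanSpace ℝ (Fin (m + 1)) | ⟪x, ξ⟫ = s} :=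
    fun s => (isClosed_eq (continuous_id.inner continuous_const) continuous_const).measurableSet
  have hGM : ∀ s : ℝ, G s ≤ ⨆ s' : ℝ, ∫⁻ x in K ∩ {x | ⟪x, ξ⟫ = s'},
      ENNReal.ofReal (f x) ∂μH[(m : ℝ)] := by
    intro s
    have hψm : Measurable fun y : EuclideanSpace ℝ (Fin m) => Φ (s, eM y) :=
      Φ.measurable.comp (measurable_const.prodMk eM.measurable)
    have step1 : G s = ∫⁻ y : EuclideanSpace ℝ (Fin m),
        (K.indicator fun x => ENNReal.ofReal (f x)) (Φ (s, eM y)) :=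
      ((EuclideanSpace.volume_preserving_symm_measurableEquiv_toLp (Fin m)).lintegral_comp
        (hHmeas.comp (measurable_const.prodMk measurable_id))).symm
    calc G s = ∫⁻ y : EuclideanSpace ℝ (Fin m),
          ((K ∩ {x | ⟪x, ξ⟫ = s}).indicator fun x => ENNReal.ofReal (f x)) (Φ (s, eM y)) := by
          rw [step1]
          refine lintegral_congr fun y => ?_
          by_cases hxK : Φ (s, eM y) ∈ K
          · rw [Set.indicator_of_mem hxK, Set.indicator_of_mem (Set.mem_inter hxK (hP1 s (eM y)))]
          · rw [Set.indicator_of_notMem hxK, Set.indicator_of_notMem fun h => hxK h.1]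
      _ = ∫⁻ x, ((K ∩ {x | ⟪x, ξ⟫ = s}).indicator fun x => ENNReal.ofReal (f x)) x
            ∂Measure.map (fun y : EuclideanSpace ℝ (Fin m) => Φ (s, eM y)) volume :=
          (lintegral_map (hF0.indicator (hKm.inter (hHsm s))) hψm).symm
      _ ≤ ∫⁻ x, ((K ∩ {x | ⟪x, ξ⟫ = s}).indicator fun x => ENNReal.ofReal (f x)) x
            ∂μH[(m : ℝ)] :=
          lintegral_mono' (map_isometry_volume_le_hausdorff (hψiso s)) le_rfl
      _ = ∫⁻ x in K ∩ {x | ⟪x, ξ⟫ = s}, ENNReal.ofReal (f x) ∂μH[(m : ℝ)] :=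
          lintegral_indicator (hKm.inter (hHsm s)) _
      _ ≤ ⨆ s' : ℝ, ∫⁻ x in K ∩ {x | ⟪x, ξ⟫ = s'}, ENNReal.ofReal (f x) ∂μH[(m : ℝ)] :=
          le_iSup (fun s' : ℝ => ∫⁻ x in K ∩ {x | ⟪x, ξ⟫ = s'},
            ENNReal.ofReal (f x) ∂μH[(m : ℝ)]) s
  -- the moment integral
  have hwm : Measurable fun x : EuclideanSpace ℝ (Fin (m + 1)) =>
      ENNReal.ofReal (|⟪x, ξ⟫| ^ p * f x) :=
    ENNReal.measurable_ofReal.comp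
      ((((continuous_id.inner continuous_const).abs.rpow_const fun _ =>
        Or.inr hp.le).measurable).mul hfm)
  have hmom : ∫⁻ x in K, ENNReal.ofReal (|⟪x, ξ⟫| ^ p * f x)
      = ∫⁻ s, ENNReal.ofReal (|s| ^ p) * G s := by
    rw [← lintegral_indicator hKm, master _ (hwm.indicator hKm)]
    refine lintegral_congr fun s => ?_
    have hinner : Measurable fun y : Fin m → ℝ =>
        (K.indicator fun x => ENNReal.ofReal (f x)) (Φ (s, y)) :=
      hHmeas.comp (measurable_const.prodMk measurable_id)
    rw [show ENNReal.ofReal (|s| ^ p) * G s = ∫⁻ y : Fin m → ℝ, ENNReal.ofReal (|s| ^ p) *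
      (K.indicator fun x => ENNReal.ofReal (f x)) (Φ (s, y)) from
      (lintegral_const_mul _ hinner).symm]
    refine lintegral_congr fun y => ?_
    by_cases hx : Φ (s, y) ∈ K
    · rw [Set.indicator_of_mem hx, Set.indicator_of_mem hx, hP1 s y,
        ENNReal.ofReal_mul (by positivity)]
    · rw [Set.indicator_of_notMem hx, Set.indicator_of_notMem hx, mul_zero]
  have hIfin : ∫⁻ s, G s ≠ ∞ := by
    rw [← hI_eq]
    have h1 : ∫⁻ x in K, ENNReal.ofReal (f x) = ∫⁻ x in K, (‖f x‖₊ : ℝ≥0∞) := by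
      refine lintegral_congr fun x => ?_
      rw [← Real.enorm_eq_ofReal (hf0 x)]
      rfl
    rw [h1]
    exact hfint.2.ne
  rw [hI_eq, hmom]
  exact slicing_one_dim G hGmeas _ hGM hp hIfin
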